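/- Let L(y) = Σ_{k=0}^{N} a_k(x) y^{(k)} with deg(a_k) ≤ k, and let λ_j be the coefficient of x^j in L(x^j). If λ_0, λ_1, …, λ_n are pairwise distinct, then there exists a unique monic polynomial p of degree n with L(p) = λ_n · p. -/

import Mathlib

open Polynomial

open Polynomial Finset

noncomputable def Lmap (N : ℕ) (a : ℕ → Polynomial ℝ) : Polynomial ℝ →ₗ[ℝ] Polynomial ℝ :=
  ∑ k ∈ Finset.range (N + 1),
    (LinearMap.mulLeft ℝ (a k)) ∘ₗ ((Polynomial.derivative : Polynomial ℝ →ₗ[ℝ] Polynomial ℝ) ^ k)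

lemma Lmap_apply (N : ℕ) (a : ℕ → Polynomial ℝ) (p : Polynomial ℝ) :
    Lmap N a p = ∑ k ∈ Finset.range (N + 1), a k * (Polynomial.derivative^[k] p) := by
  simp [Lmap, LinearMap.sum_apply, LinearMap.mulLeft_apply, Module.End.pow_apply]

lemma degree_Lmap_le (N : ℕ) (a : ℕ → Polynomial ℝ)
    (ha : ∀ k, k ≤ N → (a k).degree ≤ (k : ℕ)) (p : Polynomial ℝ) :
    (Lmap N a p).degree ≤ p.degree := by
  rw [Lmap_apply]
  refine (degree_sum_le _ _).trans ?_
  rw [Finset.sup_le_iff]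
  intro k hk
  by_cases h : Polynomial.derivative^[k] p = 0
  · simp [h]
  · have hk' : k ≤ p.natDegree := by
      by_contra hc
      exact h (Polynomial.iterate_derivative_eq_zero (by omega))
    have hp0 : p ≠ 0 := by rintro rfl; simp at h
    have h1 : (a k * Polynomial.derivative^[k] p).degree ≤ (k : WithBot ℕ) + (p.natDegree - k : ℕ) := by
      refine (degree_mul_le _ _).trans (add_le_add (ha k (Finset.mem_range_succ_iff.mp hk)) ?_)
      exact (degree_le_natDegree).trans (by exact_mod_cast Polynomial.natDegree_iterate_derivative p k)
    refine h1.trans ?_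
    rw [degree_eq_natDegree hp0]
    have : k + (p.natDegree - k) = p.natDegree := by omega
    calc (k : WithBot ℕ) + (p.natDegree - k : ℕ)
        = ((k + (p.natDegree - k) : ℕ) : WithBot ℕ) := by push_cast; ring
      _ = ((p.natDegree : ℕ) : WithBot ℕ) := by rw [this]
      _ ≤ _ := le_refl _

lemma coeff_Lmap (N : ℕ) (a : ℕ → Polynomial ℝ) (p : Polynomial ℝ) (j : ℕ) :
    (Lmap N a p).coeff j
      = ∑ m ∈ Finset.range (p.natDegree + 1), p.coeff m * (Lmap N a (X ^ m)).coeff j := by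
  conv_lhs => rw [p.as_sum_range, map_sum]
  rw [finset_sum_coeff]
  refine Finset.sum_congr rfl fun m _ => ?_
  rw [← smul_X_eq_monomial, map_smul, coeff_smul, smul_eq_mul]

lemma coeff_Lmap_top (N : ℕ) (a : ℕ → Polynomial ℝ)
    (ha : ∀ k, k ≤ N → (a k).degree ≤ (k : ℕ)) (q : Polynomial ℝ) :
    (Lmap N a q).coeff q.natDegree
      = (Lmap N a (X ^ q.natDegree)).coeff q.natDegree * q.leadingCoeff := by
  rw [coeff_Lmap, Finset.sum_range_succ]
  have : ∀ m ∈ Finset.range q.natDegree, q.coeff m * (Lmap N a (X ^ m)).coeff q.natDegree = 0 := by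
    intro m hm
    have : (Lmap N a (X ^ m)).coeff q.natDegree = 0 := by
      refine coeff_eq_zero_of_degree_lt (lt_of_le_of_lt ((degree_Lmap_le N a ha _).trans (degree_X_pow m).le) (by exact_mod_cast Finset.mem_range.mp hm))
    simp [this]
  rw [Finset.sum_eq_zero this, zero_add, mul_comm, leadingCoeff]


theorem stmt_2 (N n : ℕ) (a : ℕ → Polynomial ℝ)
    (ha : ∀ k, k ≤ N → (a k).degree ≤ (k : ℕ)) :
    let L : Polynomial ℝ → Polynomial ℝ :=
      fun p => ∑ k ∈ Finset.range (N + 1), a k * (Polynomial.derivative^[k] p)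
    let lam : ℕ → ℝ := fun j => (L (X ^ j)).coeff j
    (∀ i j, i ≤ n → j ≤ n → i ≠ j → lam i ≠ lam j) →
      ∃! p : Polynomial ℝ, p.Monic ∧ p.natDegree = n ∧ L p = lam n • p := by
  intro L lam hlam
  have hL : ∀ p, L p = Lmap N a p := fun p => (Lmap_apply N a p).symm
  have hlamdef : ∀ j, lam j = (Lmap N a (X ^ j)).coeff j := fun j => by
    show (L (X ^ j)).coeff j = _; rw [hL]
  have key : ∀ q : Polynomial ℝ, q.degree < (n : WithBot ℕ) →
      Lmap N a q = lam n • q → q = 0 := by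
    intro q hdeg heq
    by_contra hq
    have hm : q.natDegree < n := by
      have h := hdeg
      rw [degree_eq_natDegree hq] at h
      exact_mod_cast h
    have h1 : (Lmap N a q).coeff q.natDegree = lam q.natDegree * q.leadingCoeff := by
      rw [coeff_Lmap_top N a ha, hlamdef]
    have h2 : (lam n • q).coeff q.natDegree = lam n * q.leadingCoeff := by
      rw [coeff_smul, smul_eq_mul, leadingCoeff]
    have h3 : lam q.natDegree = lam n :=
      mul_right_cancel₀ (leadingCoeff_ne_zero.mpr hq) (by rw [← h1, heq, h2])
    exact hlam q.natDegree n hm.le le_rfl hm.ne h3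
  set f : Polynomial ℝ →ₗ[ℝ] Polynomial ℝ := Lmap N a - lam n • LinearMap.id with hfdef
  have hfapp : ∀ p, f p = Lmap N a p - lam n • p := fun p => rfl
  have hfmem : ∀ x ∈ degreeLT ℝ n, f x ∈ degreeLT ℝ n := by
    intro x hx
    rw [mem_degreeLT] at hx ⊢
    rw [hfapp]
    exact lt_of_le_of_lt (degree_sub_le _ _)
      (max_lt (lt_of_le_of_lt (degree_Lmap_le N a ha x) hx)
        (lt_of_le_of_lt (degree_smul_le _ _) hx))
  set T := f.restrict hfmem with hT
  haveI : FiniteDimensional ℝ (degreeLT ℝ n) :=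
    LinearEquiv.finiteDimensional (degreeLTEquiv ℝ n).symm
  have hTinj : Function.Injective T := by
    rw [← LinearMap.ker_eq_bot, LinearMap.ker_eq_bot']
    intro x hx
    have hx0 : f x.val = 0 := by
      have := congrArg Subtype.val hx
      exact this
    apply Subtype.ext
    refine key x.val (mem_degreeLT.mp x.property) ?_
    rw [hfapp] at hx0
    rw [sub_eq_zero] at hx0
    exact hx0
  have hTsurj := LinearMap.injective_iff_surjective.mp hTinj
  set r : Polynomial ℝ := lam n • X ^ n - Lmap N a (X ^ n) with hrdef
  have hrmem : r ∈ degreeLT ℝ n := by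
    rw [mem_degreeLT, degree_lt_iff_coeff_zero]
    intro m hm
    rcases eq_or_lt_of_le hm with h | h
    · rw [hrdef, coeff_sub, coeff_smul, ← h, coeff_X_pow, if_pos rfl, smul_eq_mul,
        mul_one, ← hlamdef, sub_self]
    · rw [hrdef, coeff_sub, coeff_smul, coeff_X_pow, if_neg (by omega), smul_eq_mul,
        mul_zero, zero_sub, neg_eq_zero]
      refine coeff_eq_zero_of_degree_lt (lt_of_le_of_lt
        ((degree_Lmap_le N a ha _).trans (degree_X_pow n).le) ?_)
      exact_mod_cast h
  obtain ⟨q, hq⟩ := hTsurj ⟨r, hrmem⟩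
  have hq' : f q.val = r := congrArg Subtype.val hq
  have hqdeg : q.val.degree < (n : WithBot ℕ) := mem_degreeLT.mp q.property
  set p : Polynomial ℝ := X ^ n + q.val with hpdef
  have hpmonic : p.Monic := (monic_X_pow n).add_of_left (by rw [degree_X_pow]; exact hqdeg)
  have hpdeg : p.degree = (n : WithBot ℕ) := by
    rw [hpdef, degree_add_eq_left_of_degree_lt (by rw [degree_X_pow]; exact hqdeg), degree_X_pow]
  have hpnat : p.natDegree = n := natDegree_eq_of_degree_eq_some hpdeg
  have hpeig : L p = lam n • p := by
    rw [hL, hpdef, map_add, smul_add]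
    rw [hfapp, sub_eq_iff_eq_add] at hq'
    rw [hq', hrdef]
    ring_nf
  refine ⟨p, ⟨hpmonic, hpnat, hpeig⟩, ?_⟩
  rintro p1 ⟨h1, h2, h3⟩
  have hd1 : p1.degree = (n : WithBot ℕ) := by
    rw [degree_eq_natDegree h1.ne_zero, h2]
  have hsub : (p1 - p).degree < (n : WithBot ℕ) := by
    rw [← hd1]
    exact degree_sub_lt (hd1.trans hpdeg.symm) h1.ne_zero (h1.leadingCoeff.trans hpmonic.leadingCoeff.symm)
  have : Lmap N a (p1 - p) = lam n • (p1 - p) := by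
    rw [map_sub, ← hL, ← hL, h3, hpeig, smul_sub]
  have := key _ hsub this
  rw [sub_eq_zero] at this
  exact this
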